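/- arXiv:2408.17087 — 2 statements merged into one kernel-verified Lean document; each statement's English description precedes it below -/
import Mathlib

section
/- Let X follow the elliptical distribution E(μ,Σ,g), set ξ₁ := (X-μ)ᵀΣ^{-1}(X-μ), and let K : ℝ → [0,∞) be measurable. Then for any ξ > 0, h > 0 and a > 0, E[K((ψ_a(ξ) - ψ_a(ξ₁))/h)] = (π^{d/2}·h/Γ(d/2)) · ∫_{-ψ_a(ξ)/h}^{∞} K(-w) · g(Ψ_a(ψ_a(ξ) + w·h)) · Ψ_a(ψ_a(ξ) + w·h)^{(d-2)/2} / ψ_a'(Ψ_a(ψ_a(ξ) + w·h)) dw. -/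
open Real Filter MeasureTheory Matrix

/-- The transformation `ψ_a(ξ) = -a + (a^{d/2} + ξ^{d/2})^{2/d}`. -/
noncomputable def psi (d : ℕ) (a : ℝ) (ξ : ℝ) : ℝ :=
  -a + (a ^ ((d : ℝ) / 2) + ξ ^ ((d : ℝ) / 2)) ^ (2 / (d : ℝ))

/-- The inverse transformation `Ψ_a(t) = ((t+a)^{d/2} - a^{d/2})^{2/d}`. -/
noncomputable def Psi (d : ℕ) (a : ℝ) (t : ℝ) : ℝ :=
  ((t + a) ^ ((d : ℝ) / 2) - a ^ ((d : ℝ) / 2)) ^ (2 / (d : ℝ))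

/-- The quadratic form `(x-μ)ᵀ Σ⁻¹ (x-μ)`. -/
noncomputable def quadForm {d : ℕ} (μv : Fin d → ℝ) (S : Matrix (Fin d) (Fin d) ℝ)
    (x : Fin d → ℝ) : ℝ :=
  (x - μv) ⬝ᵥ (S⁻¹ *ᵥ (x - μv))

/-- The elliptical density `f(x) = |Σ|^{-1/2} g((x-μ)ᵀ Σ⁻¹ (x-μ))`. -/
noncomputable def ellDensity {d : ℕ} (g : ℝ → ℝ) (μv : Fin d → ℝ)
    (S : Matrix (Fin d) (Fin d) ℝ) (x : Fin d → ℝ) : ℝ :=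
  |S.det| ^ (-(1 : ℝ) / 2) * g (quadForm μv S x)

section auxPsi
variable {d : ℕ} {a : ℝ}

lemma aux_hp (hd : 2 ≤ d) : (0:ℝ) < (d:ℝ)/2 := by
  have : (2:ℝ) ≤ d := by exact_mod_cast hd
  linarith

lemma aux_hq (hd : 2 ≤ d) : (0:ℝ) < 2/(d:ℝ) := by
  have : (2:ℝ) ≤ d := by exact_mod_cast hd
  positivity

lemma aux_hpq (hd : 2 ≤ d) : ((d:ℝ)/2) * (2/(d:ℝ)) = 1 := by
  have : (2:ℝ) ≤ d := by exact_mod_cast hd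
  field_simp

lemma aux_hqp (hd : 2 ≤ d) : (2/(d:ℝ)) * ((d:ℝ)/2) = 1 := by rw [mul_comm]; exact aux_hpq hd

lemma aux_rpow_pq (hd : 2 ≤ d) {x : ℝ} (hx : 0 ≤ x) : (x ^ ((d:ℝ)/2)) ^ (2/(d:ℝ)) = x := by
  rw [← Real.rpow_mul hx, aux_hpq hd, Real.rpow_one]

lemma aux_rpow_qp (hd : 2 ≤ d) {x : ℝ} (hx : 0 ≤ x) : (x ^ (2/(d:ℝ))) ^ ((d:ℝ)/2) = x := by
  rw [← Real.rpow_mul hx, aux_hqp hd, Real.rpow_one]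

lemma psi_pos (hd : 2 ≤ d) (ha : 0 < a) {s : ℝ} (hs : 0 < s) : 0 < psi d a s := by
  have h1 : a ^ ((d:ℝ)/2) < a ^ ((d:ℝ)/2) + s ^ ((d:ℝ)/2) := by
    have := Real.rpow_pos_of_pos hs ((d:ℝ)/2); linarith
  have h2 : (a ^ ((d:ℝ)/2)) ^ (2/(d:ℝ)) < (a ^ ((d:ℝ)/2) + s ^ ((d:ℝ)/2)) ^ (2/(d:ℝ)) :=
    Real.rpow_lt_rpow (by positivity) h1 (aux_hq hd)
  have h3 := aux_rpow_pq hd ha.le (x := a)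
  rw [psi]; linarith [h3 ▸ h2]

lemma psi_nonneg (hd : 2 ≤ d) (ha : 0 < a) {s : ℝ} (hs : 0 ≤ s) : 0 ≤ psi d a s := by
  rcases hs.eq_or_lt with rfl | hs
  · simp [psi, Real.zero_rpow (ne_of_gt (aux_hp hd)), aux_rpow_pq hd ha.le]
  · exact (psi_pos hd ha hs).le

lemma Psi_psi (hd : 2 ≤ d) (ha : 0 < a) {s : ℝ} (hs : 0 ≤ s) : Psi d a (psi d a s) = s := by
  rw [psi, Psi]
  have h1 : -a + (a ^ ((d:ℝ)/2) + s ^ ((d:ℝ)/2)) ^ (2/(d:ℝ)) + a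
      = (a ^ ((d:ℝ)/2) + s ^ ((d:ℝ)/2)) ^ (2/(d:ℝ)) := by ring
  rw [h1, aux_rpow_qp hd (by positivity), add_sub_cancel_left, aux_rpow_pq hd hs]

lemma psi_Psi (hd : 2 ≤ d) (ha : 0 < a) {t : ℝ} (ht : 0 ≤ t) : psi d a (Psi d a t) = t := by
  have hta : 0 < t + a := by linarith
  have hbase : a ^ ((d:ℝ)/2) ≤ (t + a) ^ ((d:ℝ)/2) :=
    Real.rpow_le_rpow ha.le (by linarith) (aux_hp hd).le
  rw [Psi, psi, aux_rpow_qp hd (by linarith), add_sub_cancel, aux_rpow_pq hd hta.le]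
  ring

lemma Psi_pos (hd : 2 ≤ d) (ha : 0 < a) {t : ℝ} (ht : 0 < t) : 0 < Psi d a t := by
  have hta : a < t + a := by linarith
  have hbase : a ^ ((d:ℝ)/2) < (t + a) ^ ((d:ℝ)/2) :=
    Real.rpow_lt_rpow ha.le hta (aux_hp hd)
  exact Real.rpow_pos_of_pos (by linarith) _

lemma hasDerivAt_psi (hd : 2 ≤ d) (ha : 0 < a) {s : ℝ} (hs : 0 < s) :
    HasDerivAt (psi d a)
      (s ^ ((d:ℝ)/2 - 1) * (a ^ ((d:ℝ)/2) + s ^ ((d:ℝ)/2)) ^ (2/(d:ℝ) - 1)) s := by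
  have hin : HasDerivAt (fun x : ℝ => a ^ ((d:ℝ)/2) + x ^ ((d:ℝ)/2))
      (((d:ℝ)/2) * s ^ ((d:ℝ)/2 - 1)) s := by
    exact ((Real.hasDerivAt_rpow_const (p := (d:ℝ)/2) (Or.inl hs.ne'))).const_add _
  have hu : 0 < a ^ ((d:ℝ)/2) + s ^ ((d:ℝ)/2) := by positivity
  have hout : HasDerivAt (fun u : ℝ => u ^ (2/(d:ℝ)))
      ((2/(d:ℝ)) * (a ^ ((d:ℝ)/2) + s ^ ((d:ℝ)/2)) ^ (2/(d:ℝ) - 1))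
      (a ^ ((d:ℝ)/2) + s ^ ((d:ℝ)/2)) :=
    Real.hasDerivAt_rpow_const (Or.inl hu.ne')
  have h := (hout.comp s hin).const_add (-a)
  refine h.congr_deriv ?_
  linear_combination (s ^ ((d:ℝ)/2 - 1) * (a ^ ((d:ℝ)/2) + s ^ ((d:ℝ)/2)) ^ (2/(d:ℝ) - 1)) *
    aux_hqp hd

lemma deriv_psi (hd : 2 ≤ d) (ha : 0 < a) {s : ℝ} (hs : 0 < s) :
    deriv (psi d a) s = s ^ ((d:ℝ)/2 - 1) * (a ^ ((d:ℝ)/2) + s ^ ((d:ℝ)/2)) ^ (2/(d:ℝ) - 1) :=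
  (hasDerivAt_psi hd ha hs).deriv

lemma deriv_psi_pos (hd : 2 ≤ d) (ha : 0 < a) {s : ℝ} (hs : 0 < s) :
    0 < deriv (psi d a) s := by
  rw [deriv_psi hd ha hs]
  have h1 : (0:ℝ) < a ^ ((d:ℝ)/2) + s ^ ((d:ℝ)/2) := by positivity
  positivity

lemma hasDerivAt_Psi (hd : 2 ≤ d) (ha : 0 < a) {t : ℝ} (ht : 0 < t) :
    HasDerivAt (Psi d a)
      (((t+a) ^ ((d:ℝ)/2) - a ^ ((d:ℝ)/2)) ^ (2/(d:ℝ) - 1) * (t+a) ^ ((d:ℝ)/2 - 1)) t := by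
  have hta : 0 < t + a := by linarith
  have hB : (0:ℝ) < (t+a) ^ ((d:ℝ)/2) - a ^ ((d:ℝ)/2) := by
    have : a ^ ((d:ℝ)/2) < (t + a) ^ ((d:ℝ)/2) :=
      Real.rpow_lt_rpow ha.le (by linarith) (aux_hp hd)
    linarith
  have hin : HasDerivAt (fun x : ℝ => (x + a) ^ ((d:ℝ)/2) - a ^ ((d:ℝ)/2))
      (((d:ℝ)/2) * (t+a) ^ ((d:ℝ)/2 - 1)) t := by
    have h1 : HasDerivAt (fun x : ℝ => x + a) 1 t := (hasDerivAt_id t).add_const a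
    have h2 := (Real.hasDerivAt_rpow_const (p := (d:ℝ)/2) (Or.inl hta.ne')).comp t h1
    simpa using h2.sub_const (a ^ ((d:ℝ)/2))
  have hout : HasDerivAt (fun u : ℝ => u ^ (2/(d:ℝ)))
      ((2/(d:ℝ)) * ((t+a) ^ ((d:ℝ)/2) - a ^ ((d:ℝ)/2)) ^ (2/(d:ℝ) - 1))
      ((t+a) ^ ((d:ℝ)/2) - a ^ ((d:ℝ)/2)) :=
    Real.hasDerivAt_rpow_const (Or.inl hB.ne')
  have h2 : HasDerivAt (Psi d a)
      ((2/(d:ℝ)) * ((t+a) ^ ((d:ℝ)/2) - a ^ ((d:ℝ)/2)) ^ (2/(d:ℝ) - 1) *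
        (((d:ℝ)/2) * (t+a) ^ ((d:ℝ)/2 - 1))) t := by
    exact hout.comp t hin
  convert h2 using 1
  rw [show (2/(d:ℝ)) * ((t+a) ^ ((d:ℝ)/2) - a ^ ((d:ℝ)/2)) ^ (2/(d:ℝ) - 1) *
        (((d:ℝ)/2) * (t+a) ^ ((d:ℝ)/2 - 1))
      = ((2/(d:ℝ)) * ((d:ℝ)/2)) * (((t+a) ^ ((d:ℝ)/2) - a ^ ((d:ℝ)/2)) ^ (2/(d:ℝ) - 1) *
        (t+a) ^ ((d:ℝ)/2 - 1)) from by ring, aux_hqp hd, one_mul]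

lemma deriv_psi_Psi_mul (hd : 2 ≤ d) (ha : 0 < a) {t : ℝ} (ht : 0 < t) :
    deriv (psi d a) (Psi d a t) *
      ((((t+a) ^ ((d:ℝ)/2) - a ^ ((d:ℝ)/2)) ^ (2/(d:ℝ) - 1)) * (t+a) ^ ((d:ℝ)/2 - 1)) = 1 := by
  have hta : 0 < t + a := by linarith
  have hB : (0:ℝ) < (t+a) ^ ((d:ℝ)/2) - a ^ ((d:ℝ)/2) := by
    have : a ^ ((d:ℝ)/2) < (t + a) ^ ((d:ℝ)/2) :=
      Real.rpow_lt_rpow ha.le (by linarith) (aux_hp hd)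
    linarith
  set B := (t+a) ^ ((d:ℝ)/2) - a ^ ((d:ℝ)/2) with hBdef
  have hPsi : Psi d a t = B ^ (2/(d:ℝ)) := rfl
  have hs : 0 < Psi d a t := Psi_pos hd ha ht
  rw [deriv_psi hd ha hs, hPsi]
  have e1 : (B ^ (2/(d:ℝ))) ^ ((d:ℝ)/2 - 1) = B ^ ((2/(d:ℝ)) * ((d:ℝ)/2 - 1)) := by
    rw [← Real.rpow_mul hB.le]
  have e2 : (B ^ (2/(d:ℝ))) ^ ((d:ℝ)/2) = B := aux_rpow_qp hd hB.le
  have e3 : a ^ ((d:ℝ)/2) + B = (t+a) ^ ((d:ℝ)/2) := by rw [hBdef]; ring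
  rw [e1, e2, e3, ← Real.rpow_mul hta.le]
  rw [show B ^ (2 / (d:ℝ) * ((d:ℝ) / 2 - 1)) * (t + a) ^ ((d:ℝ) / 2 * (2 / (d:ℝ) - 1)) *
        (B ^ (2 / (d:ℝ) - 1) * (t + a) ^ ((d:ℝ) / 2 - 1))
      = (B ^ (2 / (d:ℝ) * ((d:ℝ) / 2 - 1)) * B ^ (2 / (d:ℝ) - 1)) *
        ((t + a) ^ ((d:ℝ) / 2 * (2 / (d:ℝ) - 1)) * (t + a) ^ ((d:ℝ) / 2 - 1)) from by ring,
    ← Real.rpow_add hB, ← Real.rpow_add hta,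
    show 2 / (d:ℝ) * ((d:ℝ) / 2 - 1) + (2 / (d:ℝ) - 1) = (2/(d:ℝ)) * ((d:ℝ)/2) - 1 from by ring,
    show (d:ℝ) / 2 * (2 / (d:ℝ) - 1) + ((d:ℝ) / 2 - 1) = ((d:ℝ)/2) * (2/(d:ℝ)) - 1 from by ring,
    aux_hqp hd, aux_hpq hd, sub_self, Real.rpow_zero, Real.rpow_zero, one_mul]

lemma measurable_psi : Measurable (psi d a) := by
  unfold psi; fun_prop

lemma image_sq : (fun r : ℝ => r ^ 2) '' Set.Ioi 0 = Set.Ioi 0 := by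
  ext t
  constructor
  · rintro ⟨r, hr, rfl⟩; exact pow_pos (Set.mem_Ioi.mp hr) 2
  · intro ht
    exact ⟨Real.sqrt t, Real.sqrt_pos.mpr ht, Real.sq_sqrt (le_of_lt ht)⟩

lemma Psi_lt_Psi (hd : 2 ≤ d) (ha : 0 < a) {t₁ t₂ : ℝ} (h1 : 0 ≤ t₁) (h12 : t₁ < t₂) :
    Psi d a t₁ < Psi d a t₂ := by
  have hb : a ^ ((d:ℝ)/2) ≤ (t₁ + a) ^ ((d:ℝ)/2) :=
    Real.rpow_le_rpow ha.le (by linarith) (aux_hp hd).le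
  have hbb : (t₁ + a) ^ ((d:ℝ)/2) < (t₂ + a) ^ ((d:ℝ)/2) :=
    Real.rpow_lt_rpow (by linarith) (by linarith) (aux_hp hd)
  exact Real.rpow_lt_rpow (by linarith) (by linarith) (aux_hq hd)

lemma phi_image (hd : 2 ≤ d) (ha : 0 < a) {c h : ℝ} (hc : 0 < c) (hh : 0 < h) :
    (fun w : ℝ => Psi d a (c + w * h)) '' Set.Ioi (-c / h) = Set.Ioi 0 := by
  ext t
  constructor
  · rintro ⟨w, hw, rfl⟩
    have hw' : 0 < c + w * h := by
      have := (div_lt_iff₀ hh).mp (Set.mem_Ioi.mp hw)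
      linarith
    exact Psi_pos hd ha hw'
  · intro ht
    refine ⟨(psi d a t - c) / h, ?_, ?_⟩
    · rw [Set.mem_Ioi, div_lt_div_iff_of_pos_right hh]
      have := psi_pos hd ha ht
      linarith
    · show Psi d a (c + (psi d a t - c) / h * h) = t
      rw [div_mul_cancel₀ _ hh.ne',
        show c + (psi d a t - c) = psi d a t from by ring]
      exact Psi_psi hd ha ht.le

lemma phi_injOn (hd : 2 ≤ d) (ha : 0 < a) {c h : ℝ} (hc : 0 < c) (hh : 0 < h) :
    Set.InjOn (fun w : ℝ => Psi d a (c + w * h)) (Set.Ioi (-c / h)) := by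
  have hmono : StrictMonoOn (fun w : ℝ => Psi d a (c + w * h)) (Set.Ioi (-c / h)) := by
    intro w₁ hw₁ w₂ hw₂ h12
    have h1 : 0 < c + w₁ * h := by
      have := (div_lt_iff₀ hh).mp (Set.mem_Ioi.mp hw₁)
      linarith
    exact Psi_lt_Psi hd ha h1.le (by nlinarith)
  exact hmono.injOn

end auxPsi

open scoped MatrixOrder in
noncomputable def Matrix.PosSemidef.sqrt {n : Type*} [Fintype n] [DecidableEq n]
    {A : Matrix n n ℝ} (_ : A.PosSemidef) : Matrix n n ℝ := CFC.sqrt A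

open scoped MatrixOrder in
lemma Matrix.PosSemidef.posSemidef_sqrt {n : Type*} [Fintype n] [DecidableEq n]
    {A : Matrix n n ℝ} (hA : A.PosSemidef) : hA.sqrt.PosSemidef :=
  (CFC.sqrt_nonneg A).posSemidef

open scoped MatrixOrder in
lemma Matrix.PosSemidef.sqrt_mul_self {n : Type*} [Fintype n] [DecidableEq n]
    {A : Matrix n n ℝ} (hA : A.PosSemidef) : hA.sqrt * hA.sqrt = A :=
  CFC.sqrt_mul_sqrt_self A hA.nonneg

section auxMat
variable {d : ℕ} {μv : Fin d → ℝ} {S : Matrix (Fin d) (Fin d) ℝ} (hS : S.PosDef)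

lemma measurable_quadForm : Measurable (quadForm μv S) := by
  unfold quadForm dotProduct Matrix.mulVec dotProduct
  fun_prop

lemma sqrt_posDef : (hS.posSemidef.sqrt).PosDef := by
  set T := hS.posSemidef.sqrt with hT
  have hpsd := hS.posSemidef.posSemidef_sqrt
  have h1 : T.det * T.det = S.det := by
    rw [← Matrix.det_mul, hS.posSemidef.sqrt_mul_self]
  have hdet : T.det ≠ 0 := by
    intro h0
    rw [h0, mul_zero] at h1
    exact hS.det_pos.ne' h1.symm
  exact hpsd.posDef_iff_det_ne_zero.mpr hdet

lemma sqrt_det_pos : 0 < (hS.posSemidef.sqrt).det := (sqrt_posDef hS).det_pos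

lemma sqrt_transpose : (hS.posSemidef.sqrt)ᵀ = hS.posSemidef.sqrt := by
  have := hS.posSemidef.posSemidef_sqrt.1
  rwa [Matrix.IsHermitian, Matrix.conjTranspose_eq_transpose_of_trivial] at this

lemma quadForm_sqrt_mulVec (y : Fin d → ℝ) :
    quadForm μv S (hS.posSemidef.sqrt *ᵥ y + μv) = y ⬝ᵥ y := by
  set T := hS.posSemidef.sqrt with hT
  have hdet : T.det ≠ 0 := (sqrt_det_pos hS).ne'
  have hSinv : S⁻¹ = T⁻¹ * T⁻¹ := by
    rw [← hS.posSemidef.sqrt_mul_self, Matrix.mul_inv_rev]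
  unfold quadForm
  have hTsymm : Tᵀ = T := sqrt_transpose hS
  have hkey : S⁻¹ *ᵥ (T *ᵥ y) = T⁻¹ *ᵥ y := by
    simp only [hSinv, Matrix.mulVec_mulVec]
    rw [Matrix.mul_assoc, Matrix.nonsing_inv_mul _ (isUnit_iff_ne_zero.mpr hdet),
      Matrix.mul_one]
  rw [add_sub_cancel_right, hkey, Matrix.dotProduct_mulVec,
    show (T *ᵥ y) = y ᵥ* T from by
      have h5 := Matrix.mulVec_transpose T y
      rwa [hTsymm] at h5,
    Matrix.vecMul_vecMul, Matrix.mul_nonsing_inv _ (isUnit_iff_ne_zero.mpr hdet),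
    Matrix.vecMul_one]

lemma map_affine_volume (hdp : 0 < (hS.posSemidef.sqrt).det) :
    Measure.map (fun y => hS.posSemidef.sqrt *ᵥ y + μv) (volume : Measure (Fin d → ℝ))
      = ENNReal.ofReal |(hS.posSemidef.sqrt).det⁻¹| • volume := by
  set T := hS.posSemidef.sqrt with hT
  have h1 : (fun y => T *ᵥ y + μv) = (fun z => z + μv) ∘ (Matrix.toLin' T) := by
    funext y; simp [Matrix.toLin'_apply]
  rw [h1, ← Measure.map_map (by fun_prop) (by fun_prop),
    Real.map_matrix_volume_pi_eq_smul_volume_pi hdp.ne', Measure.map_smul,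
    map_add_right_eq_self volume μv]

end auxMat

/-- change of variables for the expectation of a kernel evaluated at the
transformed quadratic form of an elliptically distributed random vector. -/
theorem expectation_kernel_change_of_variable (d : ℕ) (hd : 2 ≤ d) (a : ℝ) (ha : 0 < a)
    (g : ℝ → ℝ) (hgm : Measurable g) (hg0 : ∀ x, 0 ≤ g x)
    (μv : Fin d → ℝ) (S : Matrix (Fin d) (Fin d) ℝ) (hS : S.PosDef)
    {Ω : Type*} [MeasurableSpace Ω] (P : Measure Ω) [IsProbabilityMeasure P]
    (X : Ω → (Fin d → ℝ)) (hXm : Measurable X)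
    (hlaw : Measure.map X P =
      volume.withDensity (fun x => ENNReal.ofReal (ellDensity g μv S x)))
    (K : ℝ → ℝ) (hKm : Measurable K) (hK0 : ∀ x, 0 ≤ K x)
    (ξ h : ℝ) (hξ : 0 < ξ) (hh : 0 < h) :
    ∫ ω, K ((psi d a ξ - psi d a (quadForm μv S (X ω))) / h) ∂P =
      (π ^ ((d : ℝ) / 2) * h / Real.Gamma ((d : ℝ) / 2)) *
        ∫ w in Set.Ioi (-(psi d a ξ) / h),
          K (-w) * g (Psi d a (psi d a ξ + w * h)) *
            (Psi d a (psi d a ξ + w * h)) ^ (((d : ℝ) - 2) / 2) /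
            deriv (psi d a) (Psi d a (psi d a ξ + w * h)) := by
  have hdR : (0:ℝ) < d := by
    have : (2:ℝ) ≤ d := by exact_mod_cast hd
    linarith
  set c := psi d a ξ with hcdef
  have hc0 : 0 < c := psi_pos hd ha hξ
  set T := hS.posSemidef.sqrt with hTdef
  have hdetT : 0 < T.det := sqrt_det_pos hS
  set G : ℝ → ℝ := fun t => g t * K ((c - psi d a t) / h) with hGdef
  have hGm : Measurable G := by
    apply hgm.mul
    exact hKm.comp ((measurable_const.sub measurable_psi).div_const h)
  have hQm : Measurable (quadForm μv S) := measurable_quadForm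
  have hFm : Measurable fun x : Fin d → ℝ => K ((c - psi d a (quadForm μv S x)) / h) :=
    hKm.comp (((measurable_const.sub (measurable_psi.comp hQm))).div_const h)
  -- Step 1: transfer to the law of X
  have step1 : ∫ ω, K ((c - psi d a (quadForm μv S (X ω))) / h) ∂P
      = ∫ x, K ((c - psi d a (quadForm μv S x)) / h) ∂(Measure.map X P) :=
    (integral_map hXm.aemeasurable hFm.aestronglyMeasurable).symm
  -- Step 2: unfold the density
  have hellm : Measurable fun x => (ellDensity g μv S x).toNNReal := by
    apply Measurable.real_toNNReal
    unfold ellDensity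
    exact (hgm.comp hQm).const_mul _
  have step2 : ∫ x, K ((c - psi d a (quadForm μv S x)) / h)
        ∂(volume.withDensity (fun x => ENNReal.ofReal (ellDensity g μv S x)))
      = ∫ x, ellDensity g μv S x * K ((c - psi d a (quadForm μv S x)) / h) ∂volume := by
    rw [show (fun x => ENNReal.ofReal (ellDensity g μv S x))
        = (fun x => ((ellDensity g μv S x).toNNReal : ENNReal)) from rfl,
      integral_withDensity_eq_integral_smul hellm]
    refine integral_congr_ae (Filter.Eventually.of_forall fun x => ?_)
    have h1 : (0:ℝ) ≤ ellDensity g μv S x := by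
      unfold ellDensity
      exact mul_nonneg (Real.rpow_nonneg (abs_nonneg _) _) (hg0 _)
    simp only [NNReal.smul_def, Real.coe_toNNReal _ h1, smul_eq_mul]
  have step2' : ∫ x, ellDensity g μv S x * K ((c - psi d a (quadForm μv S x)) / h) ∂volume
      = |S.det| ^ (-(1:ℝ)/2) * ∫ x, G (quadForm μv S x) ∂volume := by
    rw [← integral_const_mul]
    refine integral_congr_ae (Filter.Eventually.of_forall fun x => ?_)
    unfold ellDensity
    rw [hGdef]
    ring
  -- Step 3: linear change of variables
  have hφm : Measurable fun y : Fin d → ℝ => T *ᵥ y + μv := by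
    have : Measurable fun y : Fin d → ℝ => T *ᵥ y := by
      unfold Matrix.mulVec dotProduct
      fun_prop
    fun_prop
  have step3 : ∫ x, G (quadForm μv S x) ∂volume
      = T.det * ∫ y, G (y ⬝ᵥ y) ∂(volume : Measure (Fin d → ℝ)) := by
    have e1 : ∫ y, G (quadForm μv S (T *ᵥ y + μv)) ∂volume
        = ∫ x, G (quadForm μv S x) ∂(Measure.map (fun y => T *ᵥ y + μv) volume) :=
      (integral_map hφm.aemeasurable (hGm.comp hQm).aestronglyMeasurable).symm
    rw [show Measure.map (fun y => T *ᵥ y + μv) (volume : Measure (Fin d → ℝ))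
          = ENNReal.ofReal |T.det⁻¹| • volume from map_affine_volume hS hdetT,
      integral_smul_measure, ENNReal.toReal_ofReal (abs_nonneg _),
      abs_of_pos (inv_pos.mpr hdetT)] at e1
    have e2 : ∀ y : Fin d → ℝ, G (quadForm μv S (T *ᵥ y + μv)) = G (y ⬝ᵥ y) := fun y => by
      rw [quadForm_sqrt_mulVec hS]
    simp_rw [e2] at e1
    rw [e1, smul_eq_mul, ← mul_assoc, mul_inv_cancel₀ hdetT.ne', one_mul]
  -- the constant in front simplifies
  have hconst : |S.det| ^ (-(1:ℝ)/2) * T.det = 1 := by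
    have hSd : S.det = T.det * T.det := by
      rw [← Matrix.det_mul, hS.posSemidef.sqrt_mul_self]
    rw [abs_of_pos hS.det_pos, hSd, show T.det * T.det = T.det ^ (2:ℝ) from by rw [Real.rpow_two, pow_two],
      ← Real.rpow_mul hdetT.le, show (2:ℝ) * (-(1:ℝ)/2) = -1 from by norm_num,
      Real.rpow_neg_one]
    exact inv_mul_cancel₀ hdetT.ne'
  -- Step 4: move to EuclideanSpace
  have step4 : ∫ y, G (y ⬝ᵥ y) ∂(volume : Measure (Fin d → ℝ))
      = ∫ z : EuclideanSpace ℝ (Fin d), G (‖z‖ ^ 2) ∂volume := by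
    have e1 := (EuclideanSpace.volume_preserving_symm_measurableEquiv_toLp (Fin d)).integral_comp
      (MeasurableEquiv.toLp 2 (Fin d → ℝ)).symm.measurableEmbedding (fun y => G (y ⬝ᵥ y))
    rw [← e1]
    refine integral_congr_ae (Filter.Eventually.of_forall fun z => ?_)
    have hz : ‖z‖^2 = ∑ i, z i * z i := by
      rw [EuclideanSpace.norm_eq, Real.sq_sqrt (by positivity)]
      exact Finset.sum_congr rfl fun i _ => by rw [Real.norm_eq_abs, sq_abs, pow_two]
    show G ((MeasurableEquiv.toLp 2 (Fin d → ℝ)).symm z ⬝ᵥ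
        (MeasurableEquiv.toLp 2 (Fin d → ℝ)).symm z) = G (‖z‖ ^ 2)
    congr 1
    rw [hz]
    rfl
  -- Step 5: polar coordinates
  haveI : Nonempty (Fin d) := ⟨⟨0, by omega⟩⟩
  haveI : Nontrivial (EuclideanSpace ℝ (Fin d)) := by
    refine nontrivial_of_ne (EuclideanSpace.single ⟨0, by omega⟩ 1) 0 fun hcon => ?_
    have := congrArg (· ⟨0, by omega⟩) hcon
    simp [EuclideanSpace.single] at this
  have step5 : ∫ z : EuclideanSpace ℝ (Fin d), G (‖z‖ ^ 2) ∂volume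
      = (d : ℝ) * (Real.sqrt π ^ d / Real.Gamma ((d:ℝ)/2 + 1)) *
        ∫ r in Set.Ioi (0:ℝ), r ^ (d - 1) • G (r ^ 2) := by
    have e1 := integral_fun_norm_addHaar (volume : Measure (EuclideanSpace ℝ (Fin d)))
      (fun r => G (r ^ 2))
    rw [finrank_euclideanSpace_fin] at e1
    have hGam : 0 < Real.Gamma ((d:ℝ)/2 + 1) := Real.Gamma_pos_of_pos (by positivity)
    rw [e1, measureReal_def, EuclideanSpace.volume_ball]
    simp only [Fintype.card_fin, ENNReal.ofReal_one, one_pow, one_mul]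
    rw [ENNReal.toReal_ofReal (div_nonneg (pow_nonneg (Real.sqrt_nonneg _) _) hGam.le),
      nsmul_eq_mul, smul_eq_mul]
    ring
  -- Step 6: substitution t = r^2
  set g₃ : ℝ → ℝ := fun t => (1/2) * t ^ (((d:ℝ)-2)/2) * G t with hg3def
  have step6 : ∫ t in Set.Ioi (0:ℝ), g₃ t
      = ∫ r in Set.Ioi (0:ℝ), r ^ (d - 1) • G (r ^ 2) := by
    have hderiv : ∀ x ∈ Set.Ioi (0:ℝ),
        HasDerivWithinAt (fun r : ℝ => r ^ 2) (2 * x) (Set.Ioi (0:ℝ)) x := fun x hx => by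
      simpa using (hasDerivAt_pow 2 x).hasDerivWithinAt
    have hinj : Set.InjOn (fun r : ℝ => r ^ 2) (Set.Ioi 0) := fun x hx y hy hxy => by
      have hx' : (0:ℝ) < x := hx
      have hy' : (0:ℝ) < y := hy
      have hxy' : x ^ 2 = y ^ 2 := hxy
      calc x = Real.sqrt (x ^ 2) := (Real.sqrt_sq hx'.le).symm
        _ = Real.sqrt (y ^ 2) := by rw [hxy']
        _ = y := Real.sqrt_sq hy'.le
    have h0 := integral_image_eq_integral_abs_deriv_smul measurableSet_Ioi hderiv hinj g₃
    rw [image_sq] at h0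
    rw [h0]
    refine setIntegral_congr_fun measurableSet_Ioi fun r hr => ?_
    have hr0 : (0:ℝ) < r := hr
    have h2 : ((r ^ 2 : ℝ)) ^ (((d:ℝ)-2)/2) = r ^ ((d:ℝ) - 2) := by
      rw [← Real.rpow_two, ← Real.rpow_mul hr0.le]
      congr 1
      ring
    have h3 : r * r ^ ((d:ℝ)-2) = r ^ ((d:ℝ)-1) := by
      rw [show r * r ^ ((d:ℝ)-2) = r ^ (1:ℝ) * r ^ ((d:ℝ)-2) from by rw [Real.rpow_one],
        ← Real.rpow_add hr0]
      congr 1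
      ring
    have h4 : r ^ ((d:ℝ)-1) = r ^ (d - 1 : ℕ) := by
      rw [← Real.rpow_natCast r (d-1), Nat.cast_sub (by omega : 1 ≤ d), Nat.cast_one]
    rw [smul_eq_mul, smul_eq_mul, abs_of_pos (by linarith : (0:ℝ) < 2 * r), hg3def]
    show 2 * r * (1/2 * ((r:ℝ)^2) ^ (((d:ℝ)-2)/2) * G (r^2)) = r ^ (d-1) * G (r^2)
    rw [h2, show 2 * r * (1/2 * r ^ ((d:ℝ)-2) * G (r^2)) = (r * r ^ ((d:ℝ)-2)) * G (r^2)
        from by ring, h3, h4]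
  -- Step 7: substitution t = Psi (c + w h)
  have hφd : ∀ w ∈ Set.Ioi (-c/h), HasDerivWithinAt (fun w : ℝ => Psi d a (c + w * h))
      ((((c + w * h + a) ^ ((d:ℝ)/2) - a ^ ((d:ℝ)/2)) ^ (2/(d:ℝ) - 1) *
        (c + w * h + a) ^ ((d:ℝ)/2 - 1)) * h) (Set.Ioi (-c/h)) w := fun w hw => by
    have ht : 0 < c + w * h := by
      have := (div_lt_iff₀ hh).mp (Set.mem_Ioi.mp hw)
      linarith
    have hinner : HasDerivAt (fun w : ℝ => c + w * h) h w := by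
      simpa using ((hasDerivAt_id w).mul_const h).const_add c
    exact ((hasDerivAt_Psi hd ha ht).comp w hinner).hasDerivWithinAt
  have step7 : ∫ t in Set.Ioi (0:ℝ), g₃ t
      = ∫ w in Set.Ioi (-c/h),
          |(((c + w * h + a) ^ ((d:ℝ)/2) - a ^ ((d:ℝ)/2)) ^ (2/(d:ℝ) - 1) *
            (c + w * h + a) ^ ((d:ℝ)/2 - 1)) * h| • g₃ (Psi d a (c + w * h)) := by
    have h0 := integral_image_eq_integral_abs_deriv_smul measurableSet_Ioi hφd
      (phi_injOn hd ha hc0 hh) g₃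
    rw [phi_image hd ha hc0 hh] at h0
    exact h0
  -- Step 8: identify the integrand
  have step8 : (∫ w in Set.Ioi (-c/h),
        |(((c + w * h + a) ^ ((d:ℝ)/2) - a ^ ((d:ℝ)/2)) ^ (2/(d:ℝ) - 1) *
          (c + w * h + a) ^ ((d:ℝ)/2 - 1)) * h| • g₃ (Psi d a (c + w * h)))
      = (h/2) * ∫ w in Set.Ioi (-c/h),
          K (-w) * g (Psi d a (c + w * h)) * (Psi d a (c + w * h)) ^ (((d:ℝ) - 2) / 2) /
            deriv (psi d a) (Psi d a (c + w * h)) := by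
    rw [← integral_const_mul]
    refine setIntegral_congr_fun measurableSet_Ioi fun w hw => ?_
    have ht : 0 < c + w * h := by
      have := (div_lt_iff₀ hh).mp (Set.mem_Ioi.mp hw)
      linarith
    have hta : 0 < c + w * h + a := by linarith
    have hB : (0:ℝ) < (c + w * h + a) ^ ((d:ℝ)/2) - a ^ ((d:ℝ)/2) := by
      have : a ^ ((d:ℝ)/2) < (c + w * h + a) ^ ((d:ℝ)/2) :=
        Real.rpow_lt_rpow ha.le (by linarith) (aux_hp hd)
      linarith
    have hψ := deriv_psi_Psi_mul hd ha ht
    have hderivpos : 0 < deriv (psi d a) (Psi d a (c + w * h)) :=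
      deriv_psi_pos hd ha (Psi_pos hd ha ht)
    have hXinv : ((c + w * h + a) ^ ((d:ℝ)/2) - a ^ ((d:ℝ)/2)) ^ (2/(d:ℝ) - 1) *
        (c + w * h + a) ^ ((d:ℝ)/2 - 1) = (deriv (psi d a) (Psi d a (c + w * h)))⁻¹ :=
      eq_inv_of_mul_eq_one_right hψ
    have harg : (c - (c + w * h)) / h = -w := by
      rw [div_eq_iff hh.ne']
      ring
    rw [smul_eq_mul, hXinv, hg3def]
    show |(deriv (psi d a) (Psi d a (c + w * h)))⁻¹ * h| *
        (1/2 * (Psi d a (c + w * h)) ^ (((d:ℝ)-2)/2) * G (Psi d a (c + w * h))) = _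
    rw [hGdef]
    show |(deriv (psi d a) (Psi d a (c + w * h)))⁻¹ * h| *
        (1/2 * (Psi d a (c + w * h)) ^ (((d:ℝ)-2)/2) *
          (g (Psi d a (c + w * h)) * K ((c - psi d a (Psi d a (c + w * h))) / h))) = _
    rw [psi_Psi hd ha ht.le, harg,
      abs_of_pos (mul_pos (inv_pos.mpr hderivpos) hh)]
    field_simp
  -- Final assembly
  rw [step1, hlaw, step2, step2', step3, step4, step5, ← step6, step7, step8]
  have hGamRec : Real.Gamma ((d:ℝ)/2 + 1) = ((d:ℝ)/2) * Real.Gamma ((d:ℝ)/2) :=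
    Real.Gamma_add_one (ne_of_gt (aux_hp hd))
  have hGamPos : 0 < Real.Gamma ((d:ℝ)/2) := Real.Gamma_pos_of_pos (aux_hp hd)
  have hsqrtpi : (Real.sqrt π : ℝ) ^ d = π ^ ((d:ℝ)/2) := by
    rw [Real.sqrt_eq_rpow, ← Real.rpow_natCast (π ^ ((1:ℝ)/2)) d,
      ← Real.rpow_mul Real.pi_pos.le]
    congr 1
    ring
  rw [hsqrtpi, hGamRec, ← mul_assoc, hconst, one_mul]
  field_simp
end

section
/- Let s > 0 and c₃, c₄, c₅ ∈ ℝ with c := 2·c₃·s - c₄ > 0, define κ(A) := (c₃·A² + c₄·A + c₅)/(s + A)² for A > -s, and set A* := (2·c₅ - c₄·s)/(2·c₃·s - c₄). If A* > 0, then A* is the strict global minimizer of κ on (0, ∞): κ(A*) < κ(A) for every A > 0 with A ≠ A*. (This applies in particular with s = ξ^{d/2} and c₃, c₄, c₅ equal to the constants C̃3, C̃4, C̃5 of the asymptotic MSE, yielding the optimal tuning parameter a_opt = (A*)^{2/d}.) -/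
/-- if `2c₃s - c₄ > 0` and `A* = (2c₅ - c₄s)/(2c₃s - c₄) > 0`, then `A*` is the
strict global minimizer of `κ(A) = (c₃A² + c₄A + c₅)/(s+A)²` on `(0,∞)`. -/
theorem kappa_strict_global_min (s : ℝ) (hs : 0 < s) (c₃ c₄ c₅ : ℝ)
    (hc : 0 < 2 * c₃ * s - c₄)
    (Astar : ℝ) (hAstar : Astar = (2 * c₅ - c₄ * s) / (2 * c₃ * s - c₄))
    (hApos : 0 < Astar) :
    ∀ A : ℝ, 0 < A → A ≠ Astar →
      (c₃ * Astar ^ 2 + c₄ * Astar + c₅) / (s + Astar) ^ 2 <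
        (c₃ * A ^ 2 + c₄ * A + c₅) / (s + A) ^ 2 := by
  intro A hA hne
  have hkey : Astar * (2 * c₃ * s - c₄) = 2 * c₅ - c₄ * s := by
    rw [hAstar]; exact div_mul_cancel₀ _ hc.ne'
  have hsA : 0 < s + A := by linarith
  have hsAs : 0 < s + Astar := by linarith
  have hk : 0 < c₃ * s ^ 2 - c₄ * s + c₅ := by nlinarith [mul_pos hsAs hc]
  have hsq : 0 < (A - Astar) ^ 2 := by
    have : A - Astar ≠ 0 := sub_ne_zero.mpr hne
    positivity
  rw [div_lt_div_iff₀ (by positivity) (by positivity)]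
  nlinarith [mul_pos hk hsq, mul_pos hsAs hc, hkey, sq_nonneg (A - Astar)]
end
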